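/- Let ℓ̂ : ℝⁿ × ℝᵐ → ℝ be a convex quadratic function that is strongly convex in its first argument uniformly in the second (there exists κ > 0 such that (x,u) ↦ ℓ̂(x,u) − κ‖x‖² is convex). Let A ∈ ℝ^{n×n}, B ∈ ℝ^{n×m}, d ∈ ℝⁿ define the dynamics x⁺ = Ax + Bu + d, and let X ⊆ ℝⁿ, U ⊆ ℝᵐ be compact convex polyhedra such that the steady-state feasible set { (x,u) ∈ X × U : x = Ax + Bu + d } is nonempty, with (x̄, ū) its unique minimizer of ℓ̂. Then the system is strictly dissipative with a nonnegative affine storage function: there exist a ∈ ℝⁿ, c ∈ ℝ, and b > 0 such that λ(x) := aᵀx + c satisfies λ(x) ≥ 0 for all x ∈ X, and ℓ̂(x,u) − ℓ̂(x̄,ū) + λ(x) − λ(Ax + Bu + d) ≥ b‖x − x̄‖² for all (x,u) ∈ X × U. -/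

import Mathlib

open scoped RealInnerProductSpace InnerProductSpace

/-- Stack a state-input pair into a single vector indexed by `Fin n ⊕ Fin m`. -/
def stack {n m : ℕ} (x : EuclideanSpace ℝ (Fin n)) (u : EuclideanSpace ℝ (Fin m)) :
    Fin n ⊕ Fin m → ℝ :=
  fun i => match i with
  | Sum.inl a => x a
  | Sum.inr b => u b

/-- The successor state `x⁺ = A x + B u + d`. -/
def nextState {n m : ℕ} (A : Matrix (Fin n) (Fin n) ℝ) (B : Matrix (Fin n) (Fin m) ℝ)
    (d : EuclideanSpace ℝ (Fin n)) (x : EuclideanSpace ℝ (Fin n))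
    (u : EuclideanSpace ℝ (Fin m)) : EuclideanSpace ℝ (Fin n) :=
  WithLp.toLp 2 (fun i => (∑ j, A i j * x j) + (∑ j, B i j * u j) + d i)


open Set

section helpers
variable {E : Type*} [AddCommGroup E] [Module ℝ E]

lemma affine_eval (c : E →ᵃ[ℝ] ℝ) (p q : E) : c q = c p + c.linear (q - p) := by
  have h := c.map_vadd p (q - p)
  rw [vadd_eq_add, sub_add_cancel] at h
  rw [h, vadd_eq_add]; ring

lemma affine_surj (h : E →ᵃ[ℝ] ℝ) (v₀ : E) (hv₀ : h.linear v₀ ≠ 0) (s : ℝ) :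
    ∃ l, h l = s := by
  refine ⟨((s - h 0) / h.linear v₀) • v₀, ?_⟩
  rw [affine_eval h 0, sub_zero, map_smul, smul_eq_mul]
  field_simp
  ring

/-- Extension of a convex function nonnegative on a hyperplane to a global
lower bound using a multiple of the defining affine functional. -/
lemma exists_mult (φ : E → ℝ) (hφ : ConvexOn ℝ Set.univ φ) (h : E →ᵃ[ℝ] ℝ)
    (v₀ : E) (hv₀ : h.linear v₀ ≠ 0) (hpos : ∀ l, h l = 0 → 0 ≤ φ l) :
    ∃ t : ℝ, ∀ l, 0 ≤ φ l + t * h l := by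
  have hkey : ∀ l l', h l < 0 → 0 < h l' → 0 ≤ h l' * φ l - h l * φ l' := by
    intro l l' hl hl'
    set s := h l with hs
    set s' := h l' with hs'
    have hss : (0:ℝ) < s' - s := by linarith
    have hssne : s' - s ≠ 0 := ne_of_gt hss
    set a := s' / (s' - s) with ha
    set b := -s / (s' - s) with hb
    have hab : a + b = 1 := by rw [ha, hb, ← add_div]; field_simp; ring
    have ha0 : 0 ≤ a := by positivity
    have hb0 : 0 ≤ b := by
      apply div_nonneg (by linarith) (le_of_lt hss)
    have hν : h (a • l + b • l') = 0 := by
      rw [Convex.combo_affine_apply hab, ha, hb]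
      field_simp
      rw [← hs, ← hs']; ring
    have h1 : 0 ≤ a * φ l + b * φ l' :=
      le_trans (hpos _ hν) (hφ.2 (mem_univ l) (mem_univ l') ha0 hb0 hab)
    have h2 : 0 ≤ (a * φ l + b * φ l') * (s' - s) := mul_nonneg h1 (le_of_lt hss)
    have h3 : (a * φ l + b * φ l') * (s' - s) = s' * φ l - s * φ l' := by
      rw [ha, hb]; field_simp; ring
    rw [h3] at h2; exact h2
  obtain ⟨μ₁, hμ₁⟩ := affine_surj h v₀ hv₀ 1
  obtain ⟨μ₀, hμ₀⟩ := affine_surj h v₀ hv₀ (-1)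
  set R : Set ℝ := {r | ∃ l, 0 < h l ∧ φ l / h l = r} with hR
  have hne : R.Nonempty := ⟨φ μ₁ / h μ₁, μ₁, by rw [hμ₁]; norm_num, rfl⟩
  have hbdd : BddBelow R := by
    refine ⟨-φ μ₀, ?_⟩
    rintro r ⟨l, hl, rfl⟩
    have := hkey μ₀ l (by rw [hμ₀]; norm_num) hl
    rw [hμ₀] at this
    rw [le_div_iff₀ hl]
    linarith
  refine ⟨-(sInf R), fun l => ?_⟩
  have goal_iff : 0 ≤ φ l + -(sInf R) * h l ↔ sInf R * h l ≤ φ l := by constructor <;> intro <;> linarith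
  rw [goal_iff]
  rcases lt_trichotomy (h l) 0 with hneg | hzero | hpos
  · have hlow : φ l / h l ∈ lowerBounds R := by
      rintro r ⟨l', hl', rfl⟩
      have hk := hkey l l' hneg hl'
      have h4 : h l * φ l' / h l' ≤ φ l := by
        rw [div_le_iff₀ hl']; linarith
      rw [div_le_iff_of_neg hneg]
      have h6 : φ l' / h l' * h l = h l * φ l' / h l' := by ring
      linarith
    have h5 : φ l / h l ≤ sInf R := le_csInf hne hlow
    have h7 := mul_le_mul_of_nonpos_right h5 (le_of_lt hneg)
    rw [div_mul_cancel₀ _ (ne_of_lt hneg)] at h7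
    linarith
  · rw [hzero, mul_zero]; exact hpos _ hzero
  · have h5 : sInf R ≤ φ l / h l := csInf_le hbdd ⟨l, hpos, rfl⟩
    calc sInf R * h l ≤ (φ l / h l) * h l := by
          exact mul_le_mul_of_nonneg_right h5 (le_of_lt hpos)
      _ = φ l := div_mul_cancel₀ _ (ne_of_gt hpos)
end helpers

lemma combo_neg {a b x y : ℝ} (ha : 0 ≤ a) (hb : 0 ≤ b) (hab : a + b = 1)
    (hx : x < 0) (hy : y < 0) : a * x + b * y < 0 := by
  rcases eq_or_lt_of_le ha with h | h
  · have hb1 : b = 1 := by linarith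
    rw [← h, hb1]; simpa using hy
  · have h1 : a * x < 0 := mul_neg_of_pos_of_neg h hx
    have h2 : b * y ≤ 0 := mul_nonpos_of_nonneg_of_nonpos hb hy.le
    linarith

theorem kkt : ∀ (N : ℕ) (E : Type) [NormedAddCommGroup E] [NormedSpace ℝ E]
    (ι : Type) [Fintype ι] [DecidableEq ι] (f : E → ℝ) (c : ι → E →ᵃ[ℝ] ℝ) (lam0 : E),
    Fintype.card ι ≤ N → ConvexOn ℝ Set.univ f → (∀ i, c i lam0 ≤ 0) →
    (∀ l, (∀ i, c i l ≤ 0) → f lam0 ≤ f l) →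
    ∃ y : ι → ℝ, (∀ i, 0 ≤ y i) ∧ ∀ l, f lam0 ≤ f l + ∑ i, y i * c i l := by
  intro N
  induction N with
  | zero =>
    intro E _ _ ι _ _ f c lam0 hcard hf hfeas hmin
    have hempty : IsEmpty ι := Fintype.card_eq_zero_iff.mp (Nat.le_zero.mp hcard)
    refine ⟨fun _ => 0, fun i => le_refl _, fun l => ?_⟩
    rw [Finset.univ_eq_empty, Finset.sum_empty, add_zero]
    exact hmin l (fun i => isEmptyElim i)
  | succ N IH =>
    intro E instE1 instE2 ι instι1 instι2 f c lam0 hcard hf hfeas hmin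
    classical
    set A : Set ((ι → ℝ) × ℝ) := {w | (∀ i, w.1 i < 0) ∧ w.2 < 0} with hAdef
    set B : Set ((ι → ℝ) × ℝ) :=
      {w | ∃ l, (∀ i, c i l ≤ w.1 i) ∧ f l - f lam0 ≤ w.2} with hBdef
    have hAopen : IsOpen A := by
      have : A = (⋂ i, {w : (ι → ℝ) × ℝ | w.1 i < 0}) ∩ {w : (ι → ℝ) × ℝ | w.2 < 0} := by
        ext w; simp [hAdef, Set.mem_iInter]
      rw [this]
      exact (isOpen_iInter_of_finite fun i =>
        isOpen_lt ((continuous_apply i).comp continuous_fst) continuous_const).inter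
        (isOpen_lt continuous_snd continuous_const)
    have hAconv : Convex ℝ A := by
      rintro w₁ ⟨h1, h1'⟩ w₂ ⟨h2, h2'⟩ a b ha hb hab
      refine ⟨fun i => ?_, ?_⟩
      · exact combo_neg ha hb hab (h1 i) (h2 i)
      · exact combo_neg ha hb hab h1' h2'
    have hBconv : Convex ℝ B := by
      rintro w₁ ⟨l₁, hc₁, hf₁⟩ w₂ ⟨l₂, hc₂, hf₂⟩ a b ha hb hab
      refine ⟨a • l₁ + b • l₂, fun i => ?_, ?_⟩
      · show c i (a • l₁ + b • l₂) ≤ a * w₁.1 i + b * w₂.1 i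
        rw [Convex.combo_affine_apply hab]
        exact add_le_add (mul_le_mul_of_nonneg_left (hc₁ i) ha)
          (mul_le_mul_of_nonneg_left (hc₂ i) hb)
      · show f (a • l₁ + b • l₂) - f lam0 ≤ a * w₁.2 + b * w₂.2
        have h3 := hf.2 (Set.mem_univ l₁) (Set.mem_univ l₂) ha hb hab
        simp only [smul_eq_mul] at h3
        have e1 := mul_le_mul_of_nonneg_left hf₁ ha
        have e2 := mul_le_mul_of_nonneg_left hf₂ hb
        have e3 : a * f lam0 + b * f lam0 = f lam0 := by rw [← add_mul, hab, one_mul]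
        nlinarith [e1, e2, h3, e3]
    have hABdisj : Disjoint A B := by
      rw [Set.disjoint_left]
      rintro w ⟨hw1, hw2⟩ ⟨l, hcl, hfl⟩
      have hc0 : ∀ i, c i l ≤ 0 := fun i => le_of_lt (lt_of_le_of_lt (hcl i) (hw1 i))
      have := hmin l hc0
      linarith
    obtain ⟨φ, u, hA, hB⟩ := geometric_hahn_banach_open hAconv hAopen hBconv hABdisj
    set y : ι → ℝ := fun i => φ (Pi.single i 1, 0) with hydef
    set β : ℝ := φ ((0 : ι → ℝ), 1) with hβdef
    have hdecomp : ∀ w : (ι → ℝ) × ℝ, φ w = (∑ i, w.1 i * y i) + w.2 * β := by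
      intro w
      have hw : w = (∑ i, w.1 i • ((Pi.single i 1 : ι → ℝ), (0:ℝ))) + w.2 • ((0 : ι → ℝ), 1) := by
        apply Prod.ext
        · simp only [Prod.fst_add, Prod.fst_sum, Prod.smul_fst, Prod.snd_add]
          funext j
          simp [Finset.sum_apply, Pi.single_apply, Finset.sum_ite_eq']
        · simp [Prod.snd_sum]
      conv_lhs => rw [hw]
      rw [map_add, map_sum, map_smul, smul_eq_mul]
      congr 1
      refine Finset.sum_congr rfl fun i _ => ?_
      rw [map_smul, smul_eq_mul]
    have hBineq : ∀ l, u ≤ (∑ i, y i * c i l) + (f l - f lam0) * β := by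
      intro l
      have hmem : ((fun i => c i l, f l - f lam0) : (ι → ℝ) × ℝ) ∈ B :=
        ⟨l, fun i => le_refl _, le_refl _⟩
      have := hB _ hmem
      rw [hdecomp] at this
      simpa [mul_comm] using this
    have hy : ∀ i, 0 ≤ y i := by
      by_contra hcon
      push_neg at hcon
      obtain ⟨i, hyi⟩ := hcon
      set C : ℝ := -(∑ j ∈ Finset.univ.erase i, y j) - β with hC
      set R : ℝ := max 1 ((u - C + 1) / (-y i)) with hR
      have hR1 : (1:ℝ) ≤ R := le_max_left _ _
      have hw : ((fun j => if j = i then -R else -1, -1) : (ι → ℝ) × ℝ) ∈ A := by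
        refine ⟨fun j => ?_, ?_⟩
        · show (if j = i then -R else -1) < 0
          by_cases hj : j = i <;> simp [hj] <;> linarith
        · show (-1 : ℝ) < 0; norm_num
      have hφw0 := hA _ hw
      rw [hdecomp] at hφw0
      have hφw : (∑ j, (if j = i then -R else -1) * y j) + (-1:ℝ) * β < u := hφw0
      have hsum : (∑ j, (if j = i then -R else -1) * y j) =
          -R * y i + ∑ j ∈ Finset.univ.erase i, (-1) * y j := by
        rw [← Finset.add_sum_erase Finset.univ _ (Finset.mem_univ i)]
        simp only [if_pos rfl]
        congr 1
        refine Finset.sum_congr rfl fun j hj => ?_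
        rw [if_neg (Finset.mem_erase.mp hj).1]
      have hRbig : u - C + 1 ≤ R * (-y i) := by
        have : (u - C + 1) / (-y i) ≤ R := le_max_right _ _
        rwa [div_le_iff₀ (by linarith : (0:ℝ) < -y i)] at this
      have hs2 : ∑ j ∈ Finset.univ.erase i, (-1:ℝ) * y j =
          -(∑ j ∈ Finset.univ.erase i, y j) := by simp
      rw [hsum, hs2] at hφw
      nlinarith [hφw, hRbig, hC]
    have hβ : 0 ≤ β := by
      by_contra hcon
      push_neg at hcon
      set C : ℝ := -(∑ j, y j) with hC
      set R : ℝ := max 1 ((u - C + 1) / (-β)) with hR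
      have hR1 : (1:ℝ) ≤ R := le_max_left _ _
      have hw : ((fun _ => -1, -R) : (ι → ℝ) × ℝ) ∈ A := by
        refine ⟨fun j => ?_, ?_⟩
        · show (-1 : ℝ) < 0; norm_num
        · show -R < 0; linarith
      have hφw0 := hA _ hw
      rw [hdecomp] at hφw0
      have hφw : (∑ j, (-1:ℝ) * y j) + (-R) * β < u := hφw0
      have hRbig : u - C + 1 ≤ R * (-β) := by
        have : (u - C + 1) / (-β) ≤ R := le_max_right _ _
        rwa [div_le_iff₀ (by linarith : (0:ℝ) < -β)] at this
      have hsum : (∑ j, (-1 : ℝ) * y j) = C := by rw [hC]; simp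
      rw [hsum] at hφw
      nlinarith [hφw, hRbig, hC]
    have hu0 : 0 ≤ u := by
      by_contra hcon
      push_neg at hcon
      set S : ℝ := (∑ i, y i) + β with hS
      have hS0 : 0 ≤ S := add_nonneg (Finset.sum_nonneg fun i _ => hy i) hβ
      rcases eq_or_lt_of_le hS0 with hS1 | hS1
      · have hw : ((fun _ => -1, -1) : (ι → ℝ) × ℝ) ∈ A := by
          refine ⟨fun j => ?_, ?_⟩ <;> · show (-1:ℝ) < 0; norm_num
        have hφw0 := hA _ hw
        rw [hdecomp] at hφw0
        have hφw : (∑ i, (-1:ℝ) * y i) + (-1:ℝ) * β < u := hφw0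
        have hs2 : (∑ i, (-1:ℝ) * y i) = -(∑ i, y i) := by simp
        rw [hs2] at hφw
        linarith [hφw, hS.symm, hS1]
      · set ε : ℝ := -u / (2 * S) with hε
        have hεpos : 0 < ε := div_pos (by linarith) (by linarith)
        have hw : ((fun _ => -ε, -ε) : (ι → ℝ) × ℝ) ∈ A := by
          refine ⟨fun j => ?_, ?_⟩ <;> · show -ε < 0; linarith
        have hφw0 := hA _ hw
        rw [hdecomp] at hφw0
        have hφw : (∑ i, (-ε) * y i) + (-ε) * β < u := hφw0
        have he1 : (∑ i, (-ε) * y i) + (-ε) * β = -ε * S := by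
          rw [hS, ← Finset.mul_sum]; ring
        have he2 : -ε * S = u / 2 := by
          rw [hε]; field_simp
        rw [he1, he2] at hφw
        linarith
    rcases eq_or_lt_of_le hβ with hβ0 | hβpos
    · -- degenerate case β = 0
      have hBineq0 : ∀ l, u ≤ ∑ i, y i * c i l := by
        intro l
        have := hBineq l
        rw [← hβ0] at this
        linarith
      have hSbar_le : (∑ i, y i * c i lam0) ≤ 0 :=
        Finset.sum_nonpos fun i _ => mul_nonpos_of_nonneg_of_nonpos (hy i) (hfeas i)
      have hu0' : u = 0 := le_antisymm (le_trans (hBineq0 lam0) hSbar_le) hu0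
      have hSbar0 : (∑ i, y i * c i lam0) = 0 :=
        le_antisymm hSbar_le (by rw [← hu0']; exact hBineq0 lam0)
      have hterm0 : ∀ i, y i * c i lam0 = 0 := by
        intro i
        have := (Finset.sum_eq_zero_iff_of_nonpos
          (fun j _ => mul_nonpos_of_nonneg_of_nonpos (hy j) (hfeas j))).mp hSbar0
        exact this i (Finset.mem_univ i)
      have hLrw : ∀ l, ∑ i, y i * c i l =
          (∑ i, y i * c i lam0) + ∑ i, y i * (c i).linear (l - lam0) := by
        intro l
        rw [← Finset.sum_add_distrib]
        refine Finset.sum_congr rfl fun i _ => ?_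
        rw [affine_eval (c i) lam0 l]; ring
      have hL0 : ∀ v : E, (∑ i, y i * (c i).linear v) = 0 := by
        have hge : ∀ v : E, 0 ≤ ∑ i, y i * (c i).linear v := by
          intro v
          have h1 := hBineq0 (lam0 + v)
          rw [hLrw (lam0 + v), hSbar0, add_sub_cancel_left] at h1
          linarith [hu0]
        intro v
        have h1 := hge v
        have h2 := hge (-v)
        have h3 : (∑ i, y i * (c i).linear (-v)) = -(∑ i, y i * (c i).linear v) := by
          rw [← Finset.sum_neg_distrib]
          exact Finset.sum_congr rfl fun i _ => by rw [map_neg]; ring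
        rw [h3] at h2
        linarith
      have hall0 : ∀ l, (∑ i, y i * c i l) = 0 := by
        intro l
        rw [hLrw l, hSbar0, hL0, add_zero]
      have hyne : ∃ i, y i ≠ 0 := by
        by_contra hcontra
        push_neg at hcontra
        have hφzero : ∀ w : (ι → ℝ) × ℝ, φ w = 0 := by
          intro w
          rw [hdecomp w, ← hβ0]
          simp [hcontra]
        have hw : ((fun _ => -1, -1) : (ι → ℝ) × ℝ) ∈ A := by
          refine ⟨fun j => ?_, ?_⟩ <;> · show (-1:ℝ) < 0; norm_num
        have := hA _ hw
        rw [hφzero] at this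
        rw [hu0'] at this
        exact lt_irrefl 0 this
      obtain ⟨i₀, hi₀ne⟩ := hyne
      have hyi₀ : 0 < y i₀ := lt_of_le_of_ne (hy i₀) (Ne.symm hi₀ne)
      have hci₀0 : c i₀ lam0 = 0 := by
        have := hterm0 i₀
        rcases mul_eq_zero.mp this with h | h
        · exact absurd h hi₀ne
        · exact h
      have hsplit : ∀ g : ι → ℝ, (∑ i, g i) = g i₀ + ∑ i : {j : ι // j ≠ i₀}, g i.1 := by
        intro g
        rw [← Finset.add_sum_erase Finset.univ g (Finset.mem_univ i₀)]
        congr 1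
        exact Finset.sum_subtype (Finset.univ.erase i₀) (fun x => by simp) g
      have hcard' : Fintype.card {j : ι // j ≠ i₀} ≤ N := by
        have h1 : Fintype.card {j : ι // ¬ (j = i₀)} = Fintype.card ι - Fintype.card {j : ι // j = i₀} :=
          Fintype.card_subtype_compl _
        have h2 : Fintype.card {j : ι // j = i₀} = 1 := Fintype.card_subtype_eq i₀
        have : Fintype.card {j : ι // j ≠ i₀} = Fintype.card ι - 1 := by
          rw [← h2]; exact h1
        omega
      by_cases hlin : (c i₀).linear = 0
      · -- constraint i₀ is constant
        have hconst : ∀ l, c i₀ l = c i₀ lam0 := by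
          intro l
          rw [affine_eval (c i₀) lam0 l, hlin]
          simp
        have hmin' : ∀ l, (∀ i : {j : ι // j ≠ i₀}, c i.1 l ≤ 0) → f lam0 ≤ f l := by
          intro l hl
          apply hmin
          intro i
          by_cases hi : i = i₀
          · rw [hi, hconst l, hci₀0]
          · exact hl ⟨i, hi⟩
        obtain ⟨y', hy'0, hineq'⟩ := IH E {j : ι // j ≠ i₀} f (fun i => c i.1) lam0 hcard' hf
          (fun i => hfeas i.1) hmin'
        set Y : ι → ℝ := fun i => if h : i = i₀ then 0 else y' ⟨i, h⟩ with hY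
        refine ⟨Y, fun i => ?_, fun l => ?_⟩
        · by_cases h : i = i₀
          · simp [hY, dif_pos h]
          · simp only [hY, dif_neg h]; exact hy'0 _
        · have hs := hsplit (fun i => Y i * c i l)
          have hYi₀ : Y i₀ * c i₀ l = 0 := by simp [hY]
          have hsc : ∑ i : {j : ι // j ≠ i₀}, Y i.1 * c i.1 l =
              ∑ i : {j : ι // j ≠ i₀}, y' i * c i.1 l := by
            refine Finset.sum_congr rfl fun i _ => ?_
            simp only [hY, dif_neg i.2, Subtype.coe_eta]
          rw [hs, hYi₀, hsc, zero_add]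
          exact hineq' l
      · -- constraint i₀ is nonconstant
        have hv₀ : ∃ v : E, (c i₀).linear v ≠ 0 := by
          by_contra hcontra
          push_neg at hcontra
          exact hlin (LinearMap.ext fun v => hcontra v)
        obtain ⟨v₀, hv₀⟩ := hv₀
        set K := LinearMap.ker (c i₀).linear with hK
        set T : K →ᵃ[ℝ] E :=
          { toFun := fun v => lam0 + v.1
            linear := K.subtype
            map_vadd' := by
              intro p v
              show lam0 + ((v + p : K) : E) = (v : E) +ᵥ (lam0 + (p : E))
              rw [Submodule.coe_add, vadd_eq_add]
              abel } with hT
        have hTval : ∀ v : K, T v = lam0 + v.1 := fun v => rfl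
        have hfT : ConvexOn ℝ Set.univ (f ∘ T) := by
          have := hf.comp_affineMap T
          rwa [Set.preimage_univ] at this
        have hfeas' : ∀ i : {j : ι // j ≠ i₀}, ((c i.1).comp T) 0 ≤ 0 := by
          intro i
          show c i.1 (T 0) ≤ 0
          rw [hTval]
          simpa using hfeas i.1
        have hmin' : ∀ v : K, (∀ i : {j : ι // j ≠ i₀}, ((c i.1).comp T) v ≤ 0) →
            (f ∘ T) 0 ≤ (f ∘ T) v := by
          intro v hv
          show f (T 0) ≤ f (T v)
          have h0 : T 0 = lam0 := by rw [hTval]; simp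
          rw [h0]
          apply hmin
          intro i
          by_cases hi : i = i₀
          · subst hi
            rw [hTval, affine_eval (c i) lam0 (lam0 + v.1)]
            have : (c i).linear ((lam0 + v.1) - lam0) = 0 := by
              rw [add_sub_cancel_left]
              exact v.2
            rw [this, hci₀0]
            norm_num
          · exact hv ⟨i, hi⟩
        obtain ⟨y'', hy''0, hineq''⟩ := IH K {j : ι // j ≠ i₀} (f ∘ T)
          (fun i => (c i.1).comp T) 0 hcard' hfT hfeas' hmin'
        have hineqE : ∀ v : K, f lam0 ≤ f (lam0 + v.1) +
            ∑ i : {j : ι // j ≠ i₀}, y'' i * c i.1 (lam0 + v.1) := by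
          intro v
          have := hineq'' v
          have h0 : (f ∘ T) 0 = f lam0 := by
            show f (T 0) = f lam0
            rw [hTval]; simp
          rw [h0] at this
          exact this
        set φf : E → ℝ := fun l => f l + (∑ i : {j : ι // j ≠ i₀}, y'' i * c i.1 l) - f lam0
          with hφf
        have hφconv : ConvexOn ℝ Set.univ φf := by
          refine ⟨convex_univ, ?_⟩
          intro x _ z _ a b ha hb hab
          have h1 := hf.2 (Set.mem_univ x) (Set.mem_univ z) ha hb hab
          simp only [smul_eq_mul] at h1 ⊢
          have h3 : (∑ i : {j : ι // j ≠ i₀}, y'' i * c i.1 (a • x + b • z)) =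
              a * (∑ i : {j : ι // j ≠ i₀}, y'' i * c i.1 x) +
              b * (∑ i : {j : ι // j ≠ i₀}, y'' i * c i.1 z) := by
            rw [Finset.mul_sum, Finset.mul_sum, ← Finset.sum_add_distrib]
            refine Finset.sum_congr rfl fun i _ => ?_
            rw [Convex.combo_affine_apply hab]; simp only [smul_eq_mul]; ring
          have e3 : a * f lam0 + b * f lam0 = f lam0 := by rw [← add_mul, hab, one_mul]
          rw [hφf]
          simp only []
          rw [h3]
          linarith [h1, e3]
        have hφpos : ∀ l, c i₀ l = 0 → 0 ≤ φf l := by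
          intro l hcl
          have hvmem : l - lam0 ∈ K := by
            rw [hK, LinearMap.mem_ker]
            have := affine_eval (c i₀) lam0 l
            rw [hcl, hci₀0] at this
            linarith
          have := hineqE ⟨l - lam0, hvmem⟩
          rw [hφf]
          simp only []
          have hadd : lam0 + (l - lam0) = l := by abel
          rw [hadd] at this
          linarith
        obtain ⟨t, ht⟩ := exists_mult φf hφconv (c i₀) v₀ hv₀ hφpos
        have htineq : ∀ l, f lam0 ≤ f l + ((∑ i : {j : ι // j ≠ i₀}, y'' i * c i.1 l)
            + t * c i₀ l) := by
          intro l
          have := ht l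
          rw [hφf] at this
          simp only [] at this
          linarith
        by_cases htpos : 0 ≤ t
        · set Y : ι → ℝ := fun i => if h : i = i₀ then t else y'' ⟨i, h⟩ with hY
          refine ⟨Y, fun i => ?_, fun l => ?_⟩
          · by_cases h : i = i₀
            · simp only [hY, dif_pos h]; exact htpos
            · simp only [hY, dif_neg h]; exact hy''0 _
          · have hs := hsplit (fun i => Y i * c i l)
            have hYi₀ : Y i₀ * c i₀ l = t * c i₀ l := by simp [hY]
            have hsc : ∑ i : {j : ι // j ≠ i₀}, Y i.1 * c i.1 l =
                ∑ i : {j : ι // j ≠ i₀}, y'' i * c i.1 l := by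
              refine Finset.sum_congr rfl fun i _ => ?_
              simp only [hY, dif_neg i.2, Subtype.coe_eta]
            rw [hs, hYi₀, hsc]
            have := htineq l
            linarith
        · push_neg at htpos
          set Y : ι → ℝ := fun i => if h : i = i₀ then 0 else y'' ⟨i, h⟩ + (-t / y i₀) * y i
            with hY
          refine ⟨Y, fun i => ?_, fun l => ?_⟩
          · by_cases h : i = i₀
            · simp [hY, dif_pos h]
            · simp only [hY, dif_neg h]
              have h1 : (0:ℝ) ≤ -t / y i₀ := div_nonneg (by linarith) hyi₀.le
              exact add_nonneg (hy''0 _) (mul_nonneg h1 (hy i))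
          · have hs := hsplit (fun i => Y i * c i l)
            have hYi₀ : Y i₀ * c i₀ l = 0 := by simp [hY]
            have hsc : ∑ i : {j : ι // j ≠ i₀}, Y i.1 * c i.1 l =
                (∑ i : {j : ι // j ≠ i₀}, y'' i * c i.1 l)
                  + (-t / y i₀) * (∑ i : {j : ι // j ≠ i₀}, y i.1 * c i.1 l) := by
              rw [Finset.mul_sum, ← Finset.sum_add_distrib]
              refine Finset.sum_congr rfl fun i _ => ?_
              simp only [hY, dif_neg i.2, Subtype.coe_eta]
              ring
            have hsum2 : (∑ i : {j : ι // j ≠ i₀}, y i.1 * c i.1 l) = -(y i₀ * c i₀ l) := by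
              have h1 := hall0 l
              have h2 := hsplit (fun i => y i * c i l)
              linarith
            have he3 : (-t / y i₀) * -(y i₀ * c i₀ l) = t * c i₀ l := by
              field_simp
            rw [hs, hYi₀, hsc, hsum2, he3, zero_add]
            have := htineq l
            linarith
    · -- β > 0
      refine ⟨fun i => y i / β, fun i => div_nonneg (hy i) hβpos.le, fun l => ?_⟩
      have h1 := hBineq l
      have e : ∑ i, y i / β * c i l = (∑ i, y i * c i l) / β := by
        rw [Finset.sum_div]
        exact Finset.sum_congr rfl fun i _ => by ring
      rw [e]
      have h2 : (f lam0 - f l) * β ≤ ∑ i, y i * c i l := by nlinarith [h1, hu0]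
      have h3 : f lam0 - f l ≤ (∑ i, y i * c i l) / β := (le_div_iff₀ hβpos).mpr h2
      linarith


section mainhelpers

open scoped RealInnerProductSpace

lemma convexOn_add_affine {E : Type*} [AddCommGroup E] [Module ℝ E] {f : E → ℝ}
    (hf : ConvexOn ℝ Set.univ f) (g : E →ᵃ[ℝ] ℝ) :
    ConvexOn ℝ Set.univ (fun x => f x + g x) := by
  refine ⟨convex_univ, ?_⟩
  intro x _ z _ a b ha hb hab
  have h1 := hf.2 (Set.mem_univ x) (Set.mem_univ z) ha hb hab
  simp only [smul_eq_mul] at h1 ⊢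
  rw [Convex.combo_affine_apply hab]
  simp only [smul_eq_mul]
  linarith

lemma psi_lower {n m : ℕ}
    (lhat : EuclideanSpace ℝ (Fin n) → EuclideanSpace ℝ (Fin m) → ℝ)
    (κ : ℝ) (hκ : 0 < κ)
    (hstrong : ConvexOn ℝ Set.univ
      (fun p : EuclideanSpace ℝ (Fin n) × EuclideanSpace ℝ (Fin m) =>
        lhat p.1 p.2 - κ * ‖p.1‖ ^ 2))
    (A : Matrix (Fin n) (Fin n) ℝ) (B : Matrix (Fin n) (Fin m) ℝ)
    (d : EuclideanSpace ℝ (Fin n))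
    (X : Set (EuclideanSpace ℝ (Fin n))) (U : Set (EuclideanSpace ℝ (Fin m)))
    (hXconv : Convex ℝ X) (hUconv : Convex ℝ U)
    (xbar : EuclideanSpace ℝ (Fin n)) (ubar : EuclideanSpace ℝ (Fin m))
    (hxX : xbar ∈ X) (huU : ubar ∈ U)
    (hsteady : xbar = nextState A B d xbar ubar)
    (hmin : ∀ x ∈ X, ∀ u ∈ U, x = nextState A B d x u → lhat xbar ubar ≤ lhat x u) :
    ∀ x ∈ X, ∀ u ∈ U, x = nextState A B d x u →
      lhat xbar ubar ≤ lhat x u - κ * ‖x - xbar‖ ^ 2 := by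
  intro x hx u hu hsteady2
  by_contra hcon
  push_neg at hcon
  set D : ℝ := ‖x - xbar‖ ^ 2 with hD
  have hD0 : 0 ≤ D := by positivity
  set δ : ℝ := lhat xbar ubar - (lhat x u - κ * D) with hδdef
  have hδ : 0 < δ := by rw [hδdef]; linarith
  set t : ℝ := δ / (δ + κ * D) with htdef
  have hden : 0 < δ + κ * D := by nlinarith
  have ht0 : 0 < t := div_pos hδ hden
  have ht1 : t ≤ 1 := by
    rw [htdef, div_le_one hden]; nlinarith
  have htv : t * (δ + κ * D) = δ := by
    rw [htdef]; field_simp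
  set xt : EuclideanSpace ℝ (Fin n) := (1 - t) • xbar + t • x with hxt
  set ut : EuclideanSpace ℝ (Fin m) := (1 - t) • ubar + t • u with hut
  have hxtX : xt ∈ X := hXconv hxX hx (by linarith) ht0.le (by ring)
  have hutU : ut ∈ U := hUconv huU hu (by linarith) ht0.le (by ring)
  have hsteadyt : xt = nextState A B d xt ut := by
    ext i
    have e1 : ∑ j, A i j * ((1 - t) * xbar j + t * x j) =
        (1 - t) * (∑ j, A i j * xbar j) + t * (∑ j, A i j * x j) := by
      rw [Finset.mul_sum, Finset.mul_sum, ← Finset.sum_add_distrib]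
      exact Finset.sum_congr rfl fun j _ => by ring
    have e2 : ∑ j, B i j * ((1 - t) * ubar j + t * u j) =
        (1 - t) * (∑ j, B i j * ubar j) + t * (∑ j, B i j * u j) := by
      rw [Finset.mul_sum, Finset.mul_sum, ← Finset.sum_add_distrib]
      exact Finset.sum_congr rfl fun j _ => by ring
    have hbi : xbar i = (∑ j, A i j * xbar j) + (∑ j, B i j * ubar j) + d i :=
      congrArg (fun z => z i) hsteady
    have hxi : x i = (∑ j, A i j * x j) + (∑ j, B i j * u j) + d i :=
      congrArg (fun z => z i) hsteady2
    show (1 - t) * xbar i + t * x i =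
      (∑ j, A i j * ((1 - t) * xbar j + t * x j)) +
      (∑ j, B i j * ((1 - t) * ubar j + t * u j)) + d i
    rw [e1, e2, hbi, hxi]
    ring
  have hmint := hmin xt hxtX ut hutU hsteadyt
  have h2 := hstrong.2 (Set.mem_univ ((xbar, ubar) :
      EuclideanSpace ℝ (Fin n) × EuclideanSpace ℝ (Fin m)))
    (Set.mem_univ ((x, u) : EuclideanSpace ℝ (Fin n) × EuclideanSpace ℝ (Fin m)))
    (by linarith : (0:ℝ) ≤ 1 - t) ht0.le (by ring)
  have hp : ((1 - t) • ((xbar, ubar) : EuclideanSpace ℝ (Fin n) × EuclideanSpace ℝ (Fin m))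
      + t • ((x, u) : EuclideanSpace ℝ (Fin n) × EuclideanSpace ℝ (Fin m))) = (xt, ut) := by
    rw [Prod.smul_mk, Prod.smul_mk, Prod.mk_add_mk]
  rw [hp] at h2
  simp only [smul_eq_mul] at h2
  have h2' : lhat xt ut - κ * ‖xt‖ ^ 2 ≤
      (1 - t) * (lhat xbar ubar - κ * ‖xbar‖ ^ 2) + t * (lhat x u - κ * ‖x‖ ^ 2) := h2
  have h5 : ‖xt‖ ^ 2 = (1 - t) * ‖xbar‖ ^ 2 + t * ‖x‖ ^ 2 - t * (1 - t) * D := by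
    rw [hD, ← real_inner_self_eq_norm_sq, ← real_inner_self_eq_norm_sq,
      ← real_inner_self_eq_norm_sq, ← real_inner_self_eq_norm_sq]
    rw [hxt]
    rw [real_inner_add_add_self]
    rw [real_inner_smul_left, real_inner_smul_right, real_inner_smul_left,
      real_inner_smul_right, real_inner_smul_left, real_inner_smul_right]
    rw [real_inner_sub_sub_self, real_inner_comm x xbar]
    ring
  have hlt : κ * t * D < δ := by nlinarith [htv, mul_pos ht0 hδ]
  have hfinal : lhat xt ut < lhat xbar ubar := by
    have hlu : lhat x u = lhat xbar ubar + κ * D - δ := by rw [hδdef]; ring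
    have hlut : t * lhat x u = t * lhat xbar ubar + t * (κ * D) - t * δ := by
      rw [hlu]; ring
    have h5k : κ * ‖xt‖ ^ 2 = κ * ((1 - t) * ‖xbar‖ ^ 2) + κ * (t * ‖x‖ ^ 2)
        - κ * (t * (1 - t) * D) := by rw [h5]; ring
    have hm := mul_lt_mul_of_pos_left hlt ht0
    clear_value D t xt ut
    linarith [h2', hlut, h5k, hm]
  linarith

end mainhelpers




noncomputable def mkAff' {E : Type*} [AddCommGroup E] [Module ℝ E] (L : E →ₗ[ℝ] ℝ) (r : ℝ) :
    E →ᵃ[ℝ] ℝ :=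
  { toFun := fun x => L x + r
    linear := L
    map_vadd' := by
      intro p v
      show L (v + p) + r = L v +ᵥ (L p + r)
      rw [map_add, vadd_eq_add]
      ring }

section assembly

/-- The linear map sending simplex weights to the corresponding convex combination. -/
noncomputable def TxL {k : ℕ} (S : Finset (EuclideanSpace ℝ (Fin k))) :
    ({v // v ∈ S} → ℝ) →ₗ[ℝ] EuclideanSpace ℝ (Fin k) where
  toFun := fun w => ∑ v : {v // v ∈ S}, w v • (v : EuclideanSpace ℝ (Fin k))
  map_add' := by
    intro w w'
    rw [← Finset.sum_add_distrib]
    exact Finset.sum_congr rfl fun v _ => by rw [Pi.add_apply, add_smul]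
  map_smul' := by
    intro c w
    rw [RingHom.id_apply, Finset.smul_sum]
    exact Finset.sum_congr rfl fun v _ => by rw [Pi.smul_apply, smul_eq_mul, mul_smul]

lemma TxL_attach {k : ℕ} (S : Finset (EuclideanSpace ℝ (Fin k)))
    (w : EuclideanSpace ℝ (Fin k) → ℝ) :
    TxL S (fun v => w v.1) = ∑ y ∈ S, w y • y := by
  show ∑ v : {v // v ∈ S}, w v.1 • (v : EuclideanSpace ℝ (Fin k)) = _
  rw [Finset.univ_eq_attach]
  exact Finset.sum_attach S (fun y => w y • y)

lemma TxL_mem_hull {k : ℕ} (S : Finset (EuclideanSpace ℝ (Fin k))) (p : {v // v ∈ S} → ℝ)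
    (h0 : ∀ v, 0 ≤ p v) (h1 : ∑ v, p v = 1) :
    TxL S p ∈ convexHull ℝ (S : Set (EuclideanSpace ℝ (Fin k))) := by
  have he : TxL S p = Finset.univ.centerMass p
      (fun v : {v // v ∈ S} => (v : EuclideanSpace ℝ (Fin k))) :=
    (Finset.centerMass_eq_of_sum_1 _ _ h1).symm
  rw [he]
  exact Finset.centerMass_mem_convexHull _ (fun i _ => h0 i) (by rw [h1]; norm_num)
    (fun i _ => Finset.mem_coe.mpr i.2)

/-- Coordinate evaluation as a linear map on Euclidean space. -/
noncomputable def evalL {k : ℕ} (i : Fin k) : EuclideanSpace ℝ (Fin k) →ₗ[ℝ] ℝ where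
  toFun := fun x => x i
  map_add' := fun _ _ => rfl
  map_smul' := fun _ _ => rfl

lemma TxL_apply_coord {k : ℕ} (S : Finset (EuclideanSpace ℝ (Fin k)))
    (w : {v // v ∈ S} → ℝ) (i : Fin k) :
    TxL S w i = ∑ v : {v // v ∈ S}, w v * (v : EuclideanSpace ℝ (Fin k)) i := by
  have := map_sum (evalL i) (fun v : {v // v ∈ S} => w v • (v : EuclideanSpace ℝ (Fin k)))
    Finset.univ
  exact this.trans (Finset.sum_congr rfl fun v _ => rfl)

/-- The sum-of-weights linear map. -/
noncomputable def LsumL {k : ℕ} (S : Finset (EuclideanSpace ℝ (Fin k))) :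
    ({v // v ∈ S} → ℝ) →ₗ[ℝ] ℝ where
  toFun := fun w => ∑ v, w v
  map_add' := by intro w w'; rw [← Finset.sum_add_distrib]; rfl
  map_smul' := by
    intro c w
    show ∑ v, (c • w) v = c • ∑ v, w v
    simp only [Pi.smul_apply, smul_eq_mul]
    rw [Finset.mul_sum]

/-- The (linear part of the) dynamics residual in coordinate `i`. -/
noncomputable def gL {n m : ℕ} (A : Matrix (Fin n) (Fin n) ℝ) (B : Matrix (Fin n) (Fin m) ℝ)
    (i : Fin n) : (EuclideanSpace ℝ (Fin n) × EuclideanSpace ℝ (Fin m)) →ₗ[ℝ] ℝ where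
  toFun := fun q => q.1 i - ((∑ j, A i j * q.1 j) + (∑ j, B i j * q.2 j))
  map_add' := by
    intro q q'
    show (q.1 i + q'.1 i) - ((∑ j, A i j * (q.1 j + q'.1 j))
      + (∑ j, B i j * (q.2 j + q'.2 j))) = _
    have e1 : (∑ j, A i j * (q.1 j + q'.1 j)) =
        (∑ j, A i j * q.1 j) + (∑ j, A i j * q'.1 j) := by
      rw [← Finset.sum_add_distrib]; exact Finset.sum_congr rfl fun j _ => by ring
    have e2 : (∑ j, B i j * (q.2 j + q'.2 j)) =
        (∑ j, B i j * q.2 j) + (∑ j, B i j * q'.2 j) := by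
      rw [← Finset.sum_add_distrib]; exact Finset.sum_congr rfl fun j _ => by ring
    rw [e1, e2]
    show _ = (q.1 i - (_ + _)) + (q'.1 i - (_ + _))
    ring
  map_smul' := by
    intro c q
    rw [RingHom.id_apply]
    show (c * q.1 i) - ((∑ j, A i j * (c * q.1 j)) + (∑ j, B i j * (c * q.2 j))) = _
    have e1 : (∑ j, A i j * (c * q.1 j)) = c * ∑ j, A i j * q.1 j := by
      rw [Finset.mul_sum]; exact Finset.sum_congr rfl fun j _ => by ring
    have e2 : (∑ j, B i j * (c * q.2 j)) = c * ∑ j, B i j * q.2 j := by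
      rw [Finset.mul_sum]; exact Finset.sum_congr rfl fun j _ => by ring
    rw [e1, e2]
    simp only [smul_eq_mul]
    ring

/-- Real inner product with a fixed left argument, as a linear map. -/
noncomputable def innerL {k : ℕ} (a : EuclideanSpace ℝ (Fin k)) :
    EuclideanSpace ℝ (Fin k) →ₗ[ℝ] ℝ where
  toFun := fun z => ⟪a, z⟫_ℝ
  map_add' := fun u v => inner_add_right a u v
  map_smul' := by
    intro c z
    show ⟪a, c • z⟫_ℝ = c • ⟪a, z⟫_ℝ
    rw [real_inner_smul_right, smul_eq_mul]

end assembly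

section cons
variable {n m : ℕ}

variable {n m : ℕ}

noncomputable def cons (A : Matrix (Fin n) (Fin n) ℝ) (B : Matrix (Fin n) (Fin m) ℝ)
    (d : EuclideanSpace ℝ (Fin n)) (SX : Finset (EuclideanSpace ℝ (Fin n)))
    (SU : Finset (EuclideanSpace ℝ (Fin m))) :
    (({v // v ∈ SX} ⊕ {v // v ∈ SU}) ⊕ ((Fin n ⊕ Fin n) ⊕ (Bool ⊕ Bool))) →
      ((({v // v ∈ SX} → ℝ) × ({v // v ∈ SU} → ℝ)) →ᵃ[ℝ] ℝ)
  | .inl (.inl v) => mkAff' (-((LinearMap.proj v).comp (LinearMap.fst ℝ _ _))) 0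
  | .inl (.inr w) => mkAff' (-((LinearMap.proj w).comp (LinearMap.snd ℝ _ _))) 0
  | .inr (.inl (.inl i)) => mkAff' ((gL A B i).comp ((TxL SX).prodMap (TxL SU))) (-(d i))
  | .inr (.inl (.inr i)) => mkAff' (-((gL A B i).comp ((TxL SX).prodMap (TxL SU)))) (d i)
  | .inr (.inr (.inl true)) => mkAff' ((LsumL SX).comp (LinearMap.fst ℝ _ _)) (-1)
  | .inr (.inr (.inl false)) => mkAff' (-((LsumL SX).comp (LinearMap.fst ℝ _ _))) 1
  | .inr (.inr (.inr true)) => mkAff' ((LsumL SU).comp (LinearMap.snd ℝ _ _)) (-1)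
  | .inr (.inr (.inr false)) => mkAff' (-((LsumL SU).comp (LinearMap.snd ℝ _ _))) 1


lemma cons_coordX (A : Matrix (Fin n) (Fin n) ℝ) (B : Matrix (Fin n) (Fin m) ℝ)
    (d : EuclideanSpace ℝ (Fin n)) (SX : Finset (EuclideanSpace ℝ (Fin n)))
    (SU : Finset (EuclideanSpace ℝ (Fin m))) (v : {v // v ∈ SX})
    (p : ({v // v ∈ SX} → ℝ) × ({v // v ∈ SU} → ℝ)) :
    cons A B d SX SU (.inl (.inl v)) p = -(p.1 v) + 0 := rfl

lemma cons_coordU (A : Matrix (Fin n) (Fin n) ℝ) (B : Matrix (Fin n) (Fin m) ℝ)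
    (d : EuclideanSpace ℝ (Fin n)) (SX : Finset (EuclideanSpace ℝ (Fin n)))
    (SU : Finset (EuclideanSpace ℝ (Fin m))) (w : {v // v ∈ SU})
    (p : ({v // v ∈ SX} → ℝ) × ({v // v ∈ SU} → ℝ)) :
    cons A B d SX SU (.inl (.inr w)) p = -(p.2 w) + 0 := rfl

lemma cons_dynp (A : Matrix (Fin n) (Fin n) ℝ) (B : Matrix (Fin n) (Fin m) ℝ)
    (d : EuclideanSpace ℝ (Fin n)) (SX : Finset (EuclideanSpace ℝ (Fin n)))
    (SU : Finset (EuclideanSpace ℝ (Fin m))) (i : Fin n)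
    (p : ({v // v ∈ SX} → ℝ) × ({v // v ∈ SU} → ℝ)) :
    cons A B d SX SU (.inr (.inl (.inl i))) p =
      TxL SX p.1 i - nextState A B d (TxL SX p.1) (TxL SU p.2) i := by
  show TxL SX p.1 i - ((∑ j, A i j * TxL SX p.1 j) + (∑ j, B i j * TxL SU p.2 j)) + -(d i) = _
  rw [nextState, PiLp.toLp_apply]
  ring

lemma cons_dynm (A : Matrix (Fin n) (Fin n) ℝ) (B : Matrix (Fin n) (Fin m) ℝ)
    (d : EuclideanSpace ℝ (Fin n)) (SX : Finset (EuclideanSpace ℝ (Fin n)))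
    (SU : Finset (EuclideanSpace ℝ (Fin m))) (i : Fin n)
    (p : ({v // v ∈ SX} → ℝ) × ({v // v ∈ SU} → ℝ)) :
    cons A B d SX SU (.inr (.inl (.inr i))) p =
      -(TxL SX p.1 i - nextState A B d (TxL SX p.1) (TxL SU p.2) i) := by
  show -(TxL SX p.1 i - ((∑ j, A i j * TxL SX p.1 j) + (∑ j, B i j * TxL SU p.2 j))) + d i = _
  rw [nextState, PiLp.toLp_apply]
  ring

lemma cons_sumX_t (A : Matrix (Fin n) (Fin n) ℝ) (B : Matrix (Fin n) (Fin m) ℝ)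
    (d : EuclideanSpace ℝ (Fin n)) (SX : Finset (EuclideanSpace ℝ (Fin n)))
    (SU : Finset (EuclideanSpace ℝ (Fin m)))
    (p : ({v // v ∈ SX} → ℝ) × ({v // v ∈ SU} → ℝ)) :
    cons A B d SX SU (.inr (.inr (.inl true))) p = (∑ v, p.1 v) + -1 := rfl

lemma cons_sumX_f (A : Matrix (Fin n) (Fin n) ℝ) (B : Matrix (Fin n) (Fin m) ℝ)
    (d : EuclideanSpace ℝ (Fin n)) (SX : Finset (EuclideanSpace ℝ (Fin n)))
    (SU : Finset (EuclideanSpace ℝ (Fin m)))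
    (p : ({v // v ∈ SX} → ℝ) × ({v // v ∈ SU} → ℝ)) :
    cons A B d SX SU (.inr (.inr (.inl false))) p = -(∑ v, p.1 v) + 1 := rfl

lemma cons_sumU_t (A : Matrix (Fin n) (Fin n) ℝ) (B : Matrix (Fin n) (Fin m) ℝ)
    (d : EuclideanSpace ℝ (Fin n)) (SX : Finset (EuclideanSpace ℝ (Fin n)))
    (SU : Finset (EuclideanSpace ℝ (Fin m)))
    (p : ({v // v ∈ SX} → ℝ) × ({v // v ∈ SU} → ℝ)) :
    cons A B d SX SU (.inr (.inr (.inr true))) p = (∑ w, p.2 w) + -1 := rfl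

lemma cons_sumU_f (A : Matrix (Fin n) (Fin n) ℝ) (B : Matrix (Fin n) (Fin m) ℝ)
    (d : EuclideanSpace ℝ (Fin n)) (SX : Finset (EuclideanSpace ℝ (Fin n)))
    (SU : Finset (EuclideanSpace ℝ (Fin m)))
    (p : ({v // v ∈ SX} → ℝ) × ({v // v ∈ SU} → ℝ)) :
    cons A B d SX SU (.inr (.inr (.inr false))) p = -(∑ w, p.2 w) + 1 := rfl

lemma obj_convex (lhat : EuclideanSpace ℝ (Fin n) → EuclideanSpace ℝ (Fin m) → ℝ)
    (κ : ℝ)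
    (hstrong : ConvexOn ℝ Set.univ
      (fun p : EuclideanSpace ℝ (Fin n) × EuclideanSpace ℝ (Fin m) =>
        lhat p.1 p.2 - κ * ‖p.1‖ ^ 2))
    (xbar : EuclideanSpace ℝ (Fin n))
    (SX : Finset (EuclideanSpace ℝ (Fin n))) (SU : Finset (EuclideanSpace ℝ (Fin m)))
    (hconvadd : ∀ {E : Type} [AddCommGroup E] [Module ℝ E] (f : E → ℝ),
      ConvexOn ℝ Set.univ f → ∀ (g : E →ᵃ[ℝ] ℝ), ConvexOn ℝ Set.univ (fun x => f x + g x)) :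
    ConvexOn ℝ Set.univ (fun p : ({v // v ∈ SX} → ℝ) × ({v // v ∈ SU} → ℝ) =>
      lhat (TxL SX p.1) (TxL SU p.2) - κ * ‖TxL SX p.1 - xbar‖ ^ 2) := by
  have hcomp := hstrong.comp_affineMap ((TxL SX).prodMap (TxL SU)).toAffineMap
  rw [Set.preimage_univ] at hcomp
  set G : (({v // v ∈ SX} → ℝ) × ({v // v ∈ SU} → ℝ)) →ᵃ[ℝ] ℝ :=
    mkAff' ((2 * κ) • ((innerL xbar).comp ((TxL SX).comp
      (LinearMap.fst ℝ _ _)))) (-(κ * ‖xbar‖ ^ 2)) with hG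
  have heq : (fun p : ({v // v ∈ SX} → ℝ) × ({v // v ∈ SU} → ℝ) =>
      lhat (TxL SX p.1) (TxL SU p.2) - κ * ‖TxL SX p.1 - xbar‖ ^ 2)
      = fun p => ((fun q : EuclideanSpace ℝ (Fin n) × EuclideanSpace ℝ (Fin m) =>
          lhat q.1 q.2 - κ * ‖q.1‖ ^ 2) ∘ ((TxL SX).prodMap (TxL SU)).toAffineMap) p + G p := by
    funext p
    show lhat (TxL SX p.1) (TxL SU p.2) - κ * ‖TxL SX p.1 - xbar‖ ^ 2
      = (lhat (TxL SX p.1) (TxL SU p.2) - κ * ‖TxL SX p.1‖ ^ 2)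
        + ((2 * κ) * ⟪xbar, TxL SX p.1⟫_ℝ + -(κ * ‖xbar‖ ^ 2))
    have hns := norm_sub_sq_real (TxL SX p.1) xbar
    rw [real_inner_comm xbar (TxL SX p.1)] at hns
    linear_combination (-κ) * hns
  rw [heq]
  exact hconvadd _ hcomp G

end cons


/-- Strict dissipativity with a nonnegative affine storage function for a
linear system with convex quadratic stage cost that is strongly convex in the state, over
compact convex polyhedral (polytopic) constraint sets, at the unique optimal steady state
`(x̄, ū)`. -/
theorem strict_dissipativity_affine_storage
    {n m : ℕ}
    (lhat : EuclideanSpace ℝ (Fin n) → EuclideanSpace ℝ (Fin m) → ℝ)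
    -- `lhat` is a convex quadratic function
    (Q : Matrix (Fin n ⊕ Fin m) (Fin n ⊕ Fin m) ℝ) (qvec : (Fin n ⊕ Fin m) → ℝ) (r : ℝ)
    (hQsymm : Q.IsSymm) (hQpsd : Q.PosSemidef)
    (hquad : ∀ x u, lhat x u =
      (1 / 2) * (∑ i, ∑ j, stack x u i * Q i j * stack x u j)
        + (∑ i, qvec i * stack x u i) + r)
    -- `lhat` is strongly convex in `x`, uniformly in `u`
    (κ : ℝ) (hκ : 0 < κ)
    (hstrong : ConvexOn ℝ Set.univ
      (fun p : EuclideanSpace ℝ (Fin n) × EuclideanSpace ℝ (Fin m) =>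
        lhat p.1 p.2 - κ * ‖p.1‖ ^ 2))
    -- dynamics
    (A : Matrix (Fin n) (Fin n) ℝ) (B : Matrix (Fin n) (Fin m) ℝ)
    (d : EuclideanSpace ℝ (Fin n))
    -- `X` and `U` are compact convex polyhedra (polytopes)
    (X : Set (EuclideanSpace ℝ (Fin n))) (U : Set (EuclideanSpace ℝ (Fin m)))
    (SX : Finset (EuclideanSpace ℝ (Fin n))) (hX : X = convexHull ℝ (SX : Set _))
    (SU : Finset (EuclideanSpace ℝ (Fin m))) (hU : U = convexHull ℝ (SU : Set _))
    -- the steady-state feasible set is nonempty and `(x̄,ū)` is its unique minimizer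
    (xbar : EuclideanSpace ℝ (Fin n)) (ubar : EuclideanSpace ℝ (Fin m))
    (hfeas : xbar ∈ X ∧ ubar ∈ U ∧ xbar = nextState A B d xbar ubar)
    (hmin : ∀ x ∈ X, ∀ u ∈ U, x = nextState A B d x u → lhat xbar ubar ≤ lhat x u)
    (huniq : ∀ x ∈ X, ∀ u ∈ U, x = nextState A B d x u →
      lhat x u = lhat xbar ubar → x = xbar ∧ u = ubar) :
    ∃ (a : EuclideanSpace ℝ (Fin n)) (c : ℝ) (b : ℝ), 0 < b ∧
      (∀ x ∈ X, 0 ≤ ⟪a, x⟫_ℝ + c) ∧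
      (∀ x ∈ X, ∀ u ∈ U,
        b * ‖x - xbar‖ ^ 2 ≤
          lhat x u - lhat xbar ubar + (⟪a, x⟫_ℝ + c) - (⟪a, nextState A B d x u⟫_ℝ + c)) := by
  classical
  letI : DecidableEq (EuclideanSpace ℝ (Fin n)) := Classical.decEq _
  letI : DecidableEq (EuclideanSpace ℝ (Fin m)) := Classical.decEq _
  obtain ⟨hxbX, hubU, hsteady⟩ := hfeas
  have hxbar' : xbar ∈ convexHull ℝ (SX : Set _) := by rw [← hX]; exact hxbX
  have hubar' : ubar ∈ convexHull ℝ (SU : Set _) := by rw [← hU]; exact hubU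
  obtain ⟨wbx, hwbx0, hwbx1, hwbxs⟩ := Finset.mem_convexHull'.mp hxbar'
  obtain ⟨wbu, hwbu0, hwbu1, hwbus⟩ := Finset.mem_convexHull'.mp hubar'
  set lam0 : ({v // v ∈ SX} → ℝ) × ({v // v ∈ SU} → ℝ) :=
    (fun v => wbx v.1, fun w => wbu w.1) with hlam0
  have hTxlam0 : TxL SX lam0.1 = xbar := by
    show TxL SX (fun v => wbx v.1) = xbar
    rw [TxL_attach]; exact hwbxs
  have hTulam0 : TxL SU lam0.2 = ubar := by
    show TxL SU (fun w => wbu w.1) = ubar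
    rw [TxL_attach]; exact hwbus
  set f0 : (({v // v ∈ SX} → ℝ) × ({v // v ∈ SU} → ℝ)) → ℝ :=
    fun p => lhat (TxL SX p.1) (TxL SU p.2) - κ * ‖TxL SX p.1 - xbar‖ ^ 2 with hf0
  have hf0conv : ConvexOn ℝ Set.univ f0 :=
    obj_convex lhat κ hstrong xbar SX SU (fun f hf g => convexOn_add_affine hf g)
  have hf0lam0 : f0 lam0 = lhat xbar ubar := by
    show lhat (TxL SX lam0.1) (TxL SU lam0.2) - κ * ‖TxL SX lam0.1 - xbar‖ ^ 2 = _
    rw [hTxlam0, hTulam0, sub_self]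
    simp
  have hsumlam0x : (∑ v, lam0.1 v) = 1 := by
    show (∑ v : {v // v ∈ SX}, wbx v.1) = 1
    rw [Finset.univ_eq_attach, Finset.sum_attach SX wbx]; exact hwbx1
  have hsumlam0u : (∑ w, lam0.2 w) = 1 := by
    show (∑ w : {v // v ∈ SU}, wbu w.1) = 1
    rw [Finset.univ_eq_attach, Finset.sum_attach SU wbu]; exact hwbu1
  have hXconv : Convex ℝ X := by rw [hX]; exact convex_convexHull ℝ _
  have hUconv : Convex ℝ U := by rw [hU]; exact convex_convexHull ℝ _
  have hpsi := psi_lower lhat κ hκ hstrong A B d X U hXconv hUconv xbar ubar hxbX hubU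
    hsteady hmin
  have hfeas0 : ∀ i, cons A B d SX SU i lam0 ≤ 0 := by
    intro i
    rcases i with (v | w) | (i | i) | b | b
    · rw [cons_coordX]
      have := hwbx0 v.1 v.2
      show -(lam0.1 v) + 0 ≤ 0
      have h2 : lam0.1 v = wbx v.1 := rfl
      rw [h2]; linarith
    · rw [cons_coordU]
      have := hwbu0 w.1 w.2
      show -(lam0.2 w) + 0 ≤ 0
      have h2 : lam0.2 w = wbu w.1 := rfl
      rw [h2]; linarith
    · rw [cons_dynp, hTxlam0, hTulam0, ← hsteady, sub_self]
    · rw [cons_dynm, hTxlam0, hTulam0, ← hsteady, sub_self, neg_zero]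
    · cases b
      · rw [cons_sumX_f, hsumlam0x]; norm_num
      · rw [cons_sumX_t, hsumlam0x]; norm_num
    · cases b
      · rw [cons_sumU_f, hsumlam0u]; norm_num
      · rw [cons_sumU_t, hsumlam0u]; norm_num
  have hmin0 : ∀ p, (∀ i, cons A B d SX SU i p ≤ 0) → f0 lam0 ≤ f0 p := by
    intro p hp
    have hx0 : ∀ v, 0 ≤ p.1 v := by
      intro v
      have := hp (.inl (.inl v)); rw [cons_coordX] at this; linarith
    have hu0 : ∀ w, 0 ≤ p.2 w := by
      intro w
      have := hp (.inl (.inr w)); rw [cons_coordU] at this; linarith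
    have hsx : (∑ v, p.1 v) = 1 := by
      have h1 := hp (.inr (.inr (.inl true))); rw [cons_sumX_t] at h1
      have h2 := hp (.inr (.inr (.inl false))); rw [cons_sumX_f] at h2
      linarith
    have hsu : (∑ w, p.2 w) = 1 := by
      have h1 := hp (.inr (.inr (.inr true))); rw [cons_sumU_t] at h1
      have h2 := hp (.inr (.inr (.inr false))); rw [cons_sumU_f] at h2
      linarith
    have hxX : TxL SX p.1 ∈ X := by rw [hX]; exact TxL_mem_hull SX p.1 hx0 hsx
    have huU : TxL SU p.2 ∈ U := by rw [hU]; exact TxL_mem_hull SU p.2 hu0 hsu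
    have hdyn : TxL SX p.1 = nextState A B d (TxL SX p.1) (TxL SU p.2) := by
      ext i
      have h1 := hp (.inr (.inl (.inl i))); rw [cons_dynp] at h1
      have h2 := hp (.inr (.inl (.inr i))); rw [cons_dynm] at h2
      have h3 : TxL SX p.1 i - nextState A B d (TxL SX p.1) (TxL SU p.2) i = 0 :=
        le_antisymm h1 (by linarith)
      linarith [h3]
    have := hpsi (TxL SX p.1) hxX (TxL SU p.2) huU hdyn
    rw [hf0lam0]
    exact this
  obtain ⟨y, hy0, hkkt⟩ := kkt
    (Fintype.card (({v // v ∈ SX} ⊕ {v // v ∈ SU}) ⊕ ((Fin n ⊕ Fin n) ⊕ (Bool ⊕ Bool))))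
    ((({v // v ∈ SX} → ℝ) × ({v // v ∈ SU} → ℝ)))
    ((({v // v ∈ SX} ⊕ {v // v ∈ SU}) ⊕ ((Fin n ⊕ Fin n) ⊕ (Bool ⊕ Bool))))
    f0 (cons A B d SX SU) lam0 (le_refl _) hf0conv hfeas0 hmin0
  set a : EuclideanSpace ℝ (Fin n) :=
    WithLp.toLp 2 (fun i => y (.inr (.inl (.inl i))) - y (.inr (.inl (.inr i)))) with ha
  have hSXne : SX.Nonempty := by
    rcases SX.eq_empty_or_nonempty with h | h
    · rw [h] at hxbar'; simp at hxbar'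
    · exact h
  set c0 : ℝ := -(SX.inf' hSXne (fun v => ⟪a, v⟫_ℝ)) with hc0
  refine ⟨a, c0, κ, hκ, ?_, ?_⟩
  · intro x hx
    rw [hX] at hx
    have hsub : (SX : Set _) ⊆
        {z : EuclideanSpace ℝ (Fin n) | SX.inf' hSXne (fun v => ⟪a, v⟫_ℝ) ≤ ⟪a, z⟫_ℝ} :=
      fun v hv => show SX.inf' hSXne (fun v => ⟪a, v⟫_ℝ) ≤ ⟪a, v⟫_ℝ from
        Finset.inf'_le _ (Finset.mem_coe.mp hv)
    have hlin : IsLinearMap ℝ (fun z : EuclideanSpace ℝ (Fin n) => ⟪a, z⟫_ℝ) :=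
      ⟨fun u' v' => inner_add_right a u' v',
       fun c z => by rw [smul_eq_mul]; exact real_inner_smul_right a z c⟩
    have hcv : Convex ℝ
        {z : EuclideanSpace ℝ (Fin n) | SX.inf' hSXne (fun v => ⟪a, v⟫_ℝ) ≤ ⟪a, z⟫_ℝ} :=
      convex_halfSpace_ge hlin _
    have hmem := convexHull_min hsub hcv hx
    have : SX.inf' hSXne (fun v => ⟪a, v⟫_ℝ) ≤ ⟪a, x⟫_ℝ := hmem
    rw [hc0]; linarith
  · intro x hx u hu
    have hx' : x ∈ convexHull ℝ (SX : Set _) := by rw [← hX]; exact hx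
    have hu' : u ∈ convexHull ℝ (SU : Set _) := by rw [← hU]; exact hu
    obtain ⟨wx, hwx0, hwx1, hwxs⟩ := Finset.mem_convexHull'.mp hx'
    obtain ⟨wu, hwu0, hwu1, hwus⟩ := Finset.mem_convexHull'.mp hu'
    set p : ({v // v ∈ SX} → ℝ) × ({v // v ∈ SU} → ℝ) :=
      (fun v => wx v.1, fun w => wu w.1) with hpdef
    have hTxp : TxL SX p.1 = x := by
      show TxL SX (fun v => wx v.1) = x
      rw [TxL_attach]; exact hwxs
    have hTup : TxL SU p.2 = u := by
      show TxL SU (fun w => wu w.1) = u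
      rw [TxL_attach]; exact hwus
    have hsump_x : (∑ v, p.1 v) = 1 := by
      show (∑ v : {v // v ∈ SX}, wx v.1) = 1
      rw [Finset.univ_eq_attach, Finset.sum_attach SX wx]; exact hwx1
    have hsump_u : (∑ w, p.2 w) = 1 := by
      show (∑ w : {v // v ∈ SU}, wu w.1) = 1
      rw [Finset.univ_eq_attach, Finset.sum_attach SU wu]; exact hwu1
    have hmaster := hkkt p
    rw [hf0lam0] at hmaster
    have hf0p : f0 p = lhat x u - κ * ‖x - xbar‖ ^ 2 := by
      show lhat (TxL SX p.1) (TxL SU p.2) - κ * ‖TxL SX p.1 - xbar‖ ^ 2 = _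
      rw [hTxp, hTup]
    set F : (({v // v ∈ SX} ⊕ {v // v ∈ SU}) ⊕ ((Fin n ⊕ Fin n) ⊕ (Bool ⊕ Bool))) → ℝ :=
      fun i => y i * cons A B d SX SU i p with hF
    have hFsplit : (∑ i, F i) =
        ((∑ v : {v // v ∈ SX}, F (.inl (.inl v))) + (∑ w : {v // v ∈ SU}, F (.inl (.inr w))))
        + (((∑ i : Fin n, F (.inr (.inl (.inl i)))) + (∑ i : Fin n, F (.inr (.inl (.inr i)))))
          + ((∑ b : Bool, F (.inr (.inr (.inl b)))) + (∑ b : Bool, F (.inr (.inr (.inr b)))))) := by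
      rw [Fintype.sum_sum_type F]
      congr 1
      · rw [Fintype.sum_sum_type]
      · rw [Fintype.sum_sum_type]
        congr 1
        · rw [Fintype.sum_sum_type]
        · rw [Fintype.sum_sum_type]
    have hcoordX : (∑ v : {v // v ∈ SX}, F (.inl (.inl v))) ≤ 0 := by
      refine Finset.sum_nonpos fun v _ => ?_
      rw [hF]
      refine mul_nonpos_of_nonneg_of_nonpos (hy0 _) ?_
      rw [cons_coordX]
      have h2 : p.1 v = wx v.1 := rfl
      have := hwx0 v.1 v.2
      rw [h2]; linarith
    have hcoordU : (∑ w : {v // v ∈ SU}, F (.inl (.inr w))) ≤ 0 := by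
      refine Finset.sum_nonpos fun w _ => ?_
      rw [hF]
      refine mul_nonpos_of_nonneg_of_nonpos (hy0 _) ?_
      rw [cons_coordU]
      have h2 : p.2 w = wu w.1 := rfl
      have := hwu0 w.1 w.2
      rw [h2]; linarith
    have hsumXzero : (∑ b : Bool, F (.inr (.inr (.inl b)))) = 0 := by
      rw [Fintype.sum_bool, hF]
      simp only []
      rw [cons_sumX_t, cons_sumX_f, hsump_x]
      ring
    have hsumUzero : (∑ b : Bool, F (.inr (.inr (.inr b)))) = 0 := by
      rw [Fintype.sum_bool, hF]
      simp only []
      rw [cons_sumU_t, cons_sumU_f, hsump_u]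
      ring
    have hdynsum : (∑ i : Fin n, F (.inr (.inl (.inl i)))) + (∑ i : Fin n, F (.inr (.inl (.inr i))))
        = ⟪a, x⟫_ℝ - ⟪a, nextState A B d x u⟫_ℝ := by
      have hinner1 : ⟪a, x⟫_ℝ = ∑ i, a i * x i := by
        simp [PiLp.inner_apply, RCLike.inner_apply, starRingEnd_apply, star_trivial]
        exact Finset.sum_congr rfl fun _ _ => mul_comm _ _
      have hinner2 : ⟪a, nextState A B d x u⟫_ℝ = ∑ i, a i * nextState A B d x u i := by
        simp [PiLp.inner_apply, RCLike.inner_apply, starRingEnd_apply, star_trivial]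
        exact Finset.sum_congr rfl fun _ _ => mul_comm _ _
      rw [hinner1, hinner2, ← Finset.sum_sub_distrib, ← Finset.sum_add_distrib]
      refine Finset.sum_congr rfl fun i _ => ?_
      rw [hF]
      simp only []
      rw [cons_dynp, cons_dynm, hTxp, hTup]
      have hai : a i = y (.inr (.inl (.inl i))) - y (.inr (.inl (.inr i))) := rfl
      rw [hai]
      ring
    rw [hf0p, hFsplit, hsumXzero, hsumUzero, hdynsum] at hmaster
    linarith [hmaster, hcoordX, hcoordU]
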